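/- Let A be a connected graph with at least 2 vertices and a fixed vertex u, and B a connected graph with a fixed vertex v, with A and B vertex-disjoint. For integers n1, n2 > 1, let G(n1, n2) be obtained from A and B by attaching a pendant path of order n1 at u and joining u to v by a path of order n2 (a u–v path with n2 vertices including u and v). Then N(G(n1−1, n2+1)) − N(G(n1, n2)) = (N(A)_u − 1)(n1 − n2 − N(B)_v). In particular, N(G(n1−1, n2+1)) > N(G(n1, n2)) if and only if N(B)_v < n1 − n2. -/

import Mathlib

open SimpleGraph

/-- Number of (nonempty) connected induced subgraphs of `G`. -/
noncomputable def numCIS {V : Type*} (G : SimpleGraph V) : ℕ :=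
  Nat.card {s : Finset V // s.Nonempty ∧ (G.induce (↑s : Set V)).Connected}

/-- Number of connected induced subgraphs of `G` containing the vertex `v`. -/
noncomputable def numCISat {V : Type*} (G : SimpleGraph V) (v : V) : ℕ :=
  Nat.card {s : Finset V // v ∈ s ∧ (G.induce (↑s : Set V)).Connected}

/-- Number of connected induced subgraphs of `G` containing both `u` and `v`. -/
noncomputable def numCISat2 {V : Type*} (G : SimpleGraph V) (u v : V) : ℕ :=
  Nat.card {s : Finset V // u ∈ s ∧ v ∈ s ∧ (G.induce (↑s : Set V)).Connected}

/-- From disjoint graphs `A`, `B` with distinguished vertices `u`, `v`: attach a pendant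
path with `a` new vertices at `u`, and connect `u` to `v` by a path with `b` new internal
vertices (for `b = 0`, `u` and `v` are joined by an edge).  Thus the pendant path has
order `a + 1` (counting `u`) and the connecting `u`–`v` path has order `b + 2`. -/
def ABjoin {VA VB : Type*} (A : SimpleGraph VA) (B : SimpleGraph VB) (u : VA) (v : VB)
    (a b : ℕ) : SimpleGraph (VA ⊕ VB ⊕ Fin a ⊕ Fin b) :=
  SimpleGraph.fromRel (fun x y =>
    (∃ p q, x = Sum.inl p ∧ y = Sum.inl q ∧ A.Adj p q) ∨
    (∃ p q, x = Sum.inr (Sum.inl p) ∧ y = Sum.inr (Sum.inl q) ∧ B.Adj p q) ∨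
    (∃ i j : Fin a, x = Sum.inr (Sum.inr (Sum.inl i)) ∧ y = Sum.inr (Sum.inr (Sum.inl j)) ∧
      (i : ℕ) + 1 = (j : ℕ)) ∨
    (∃ h : 0 < a, x = Sum.inl u ∧ y = Sum.inr (Sum.inr (Sum.inl ⟨0, h⟩))) ∨
    (∃ i j : Fin b, x = Sum.inr (Sum.inr (Sum.inr i)) ∧ y = Sum.inr (Sum.inr (Sum.inr j)) ∧
      (i : ℕ) + 1 = (j : ℕ)) ∨
    (∃ h : 0 < b, x = Sum.inl u ∧ y = Sum.inr (Sum.inr (Sum.inr ⟨0, h⟩))) ∨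
    (∃ h : 0 < b, x = Sum.inr (Sum.inr (Sum.inr ⟨b - 1, Nat.sub_lt h Nat.one_pos⟩)) ∧
      y = Sum.inr (Sum.inl v)) ∨
    (b = 0 ∧ x = Sum.inl u ∧ y = Sum.inr (Sum.inl v)))
open Function

section Infra
variable {V W : Type*}

/-- Transfer reachability in induced subgraphs along a vertex map. -/
lemma reach_transfer {G : SimpleGraph V} {H : SimpleGraph W} {s : Set V} {t : Set W}
    (f : V → W) (hf : ∀ x ∈ s, f x ∈ t)
    (hadj : ∀ x y, x ∈ s → y ∈ s → G.Adj x y → H.Adj (f x) (f y) ∨ f x = f y)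
    {x y : s} (h : (G.induce s).Reachable x y) :
    (H.induce t).Reachable ⟨f x, hf x x.2⟩ ⟨f y, hf y y.2⟩ := by
  obtain ⟨p⟩ := h
  induction p with
  | nil => exact Reachable.refl _
  | @cons a b c hab p ih =>
    have hab' : G.Adj a.1 b.1 := hab
    rcases hadj a.1 b.1 a.2 b.2 hab' with h' | h'
    · exact (SimpleGraph.Adj.reachable (by exact h' :
        (H.induce t).Adj ⟨f a.1, hf a.1 a.2⟩ ⟨f b.1, hf b.1 b.2⟩)).trans ih
    · have he : (⟨f a.1, hf a.1 a.2⟩ : t) = ⟨f b.1, hf b.1 b.2⟩ := Subtype.ext h'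
      rw [he]; exact ih

lemma connected_of_reach_root {H : SimpleGraph W} {t : Set W} (r : ↥t)
    (h : ∀ x : ↥t, (H.induce t).Reachable x r) : (H.induce t).Connected := by
  rw [connected_iff_exists_forall_reachable]
  exact ⟨r, fun w => (h w).symm⟩

/-- Induced subgraphs along an adjacency-preserving injection are isomorphic. -/
lemma connected_induce_image_iff {G : SimpleGraph V} {H : SimpleGraph W} (f : V → W)
    (hinj : Injective f) (hadj : ∀ x y, H.Adj (f x) (f y) ↔ G.Adj x y) (tset : Set V) :
    (H.induce (f '' tset)).Connected ↔ (G.induce tset).Connected := by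
  have e : G.induce tset ≃g H.induce (f '' tset) := by
    refine ⟨Equiv.Set.image f tset hinj, ?_⟩
    intro a b
    simp only [Equiv.Set.image_apply, comap_adj, Embedding.coe_subtype]
    exact hadj a.1 b.1
  exact (e.connected_iff).symm

lemma card_subtype_or {α : Type*} [Finite α] {p q : α → Prop}
    (h : ∀ a, p a → q a → False) :
    Nat.card {x // p x ∨ q x} = Nat.card {x // p x} + Nat.card {x // q x} := by
  classical
  rw [← Nat.card_sum]
  refine Nat.card_congr (Equiv.ofBijective
    (fun x => if hp : p x.1 then .inl ⟨x.1, hp⟩ else .inr ⟨x.1, x.2.resolve_left hp⟩) ⟨?_, ?_⟩)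
  · intro a b hab
    by_cases hpa : p a.1 <;> by_cases hpb : p b.1 <;>
      simp only [hpa, hpb, dif_pos, dif_neg, not_false_iff, Sum.inl.injEq, Sum.inr.injEq,
        Subtype.mk.injEq, reduceCtorEq] at hab <;>
      first
        | exact Subtype.ext hab
        | exact absurd hab (by simp)
  · rintro (⟨a, ha⟩ | ⟨a, ha⟩)
    · exact ⟨⟨a, Or.inl ha⟩, by simp [ha]⟩
    · refine ⟨⟨a, Or.inr ha⟩, ?_⟩
      have hpa : ¬ p a := fun hp => h a hp ha
      simp [hpa]

end Infra

section Pre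
variable {V1 V2 : Type*}

noncomputable def pre1 (s : Finset (V1 ⊕ V2)) : Finset V1 :=
  letI := Classical.decEq V1
  s.preimage Sum.inl Sum.inl_injective.injOn

noncomputable def pre2 (s : Finset (V1 ⊕ V2)) : Finset V2 :=
  letI := Classical.decEq V2
  s.preimage Sum.inr Sum.inr_injective.injOn

@[simp] lemma mem_pre1 {s : Finset (V1 ⊕ V2)} {a : V1} : a ∈ pre1 s ↔ Sum.inl a ∈ s := by
  unfold pre1; exact Finset.mem_preimage

@[simp] lemma mem_pre2 {s : Finset (V1 ⊕ V2)} {a : V2} : a ∈ pre2 s ↔ Sum.inr a ∈ s := by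
  unfold pre2; exact Finset.mem_preimage

lemma union_images_eq (s : Finset (V1 ⊕ V2)) :
    (pre1 s).disjSum (pre2 s) = s := by
  ext x
  rcases x with a | a <;> simp [Finset.mem_disjSum]

@[simp] lemma pre1_disjSum (t1 : Finset V1) (t2 : Finset V2) :
    pre1 (t1.disjSum t2) = t1 := by
  ext a; simp [Finset.mem_disjSum]

@[simp] lemma pre2_disjSum (t1 : Finset V1) (t2 : Finset V2) :
    pre2 (t1.disjSum t2) = t2 := by
  ext a; simp [Finset.mem_disjSum]

/-- The main counting workhorse: subsets of a sum split as pairs of subsets. -/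
lemma card_pair (Q1 : Finset V1 → Prop) (Q2 : Finset V2 → Prop) :
    Nat.card {s : Finset (V1 ⊕ V2) // Q1 (pre1 s) ∧ Q2 (pre2 s)} =
      Nat.card {t : Finset V1 // Q1 t} * Nat.card {t : Finset V2 // Q2 t} := by
  rw [← Nat.card_prod]
  refine Nat.card_congr ⟨fun s => (⟨pre1 s.1, s.2.1⟩, ⟨pre2 s.1, s.2.2⟩),
    fun t => ⟨t.1.1.disjSum t.2.1, by simp [t.1.2, t.2.2]⟩, ?_, ?_⟩
  · intro s
    exact Subtype.ext (union_images_eq s.1)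
  · intro t
    exact Prod.ext (Subtype.ext (by simp)) (Subtype.ext (by simp))

lemma card_empty_finset {α : Type*} : Nat.card {t : Finset α // t = ∅} = 1 := by
  haveI : Subsingleton {t : Finset α // t = ∅} :=
    ⟨fun a b => Subtype.ext (a.2.trans b.2.symm)⟩
  haveI : Nonempty {t : Finset α // t = ∅} := ⟨⟨∅, rfl⟩⟩
  exact Nat.card_unique

lemma card_unit_mem : Nat.card {t : Finset Unit // () ∈ t} = 1 := by
  haveI : Subsingleton {t : Finset Unit // () ∈ t} := by
    constructor
    intro a b
    apply Subtype.ext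
    ext x
    cases x
    simp [a.2, b.2]
  haveI : Nonempty {t : Finset Unit // () ∈ t} := ⟨⟨{()}, by simp⟩⟩
  exact Nat.card_unique

end Pre

section Bridge
variable {V1 V2 : Type*} (G1 : SimpleGraph V1) (G2 : SimpleGraph V2) (w1 : V1) (w2 : V2)

/-- Disjoint union of `G1` and `G2` together with a bridge edge `w1 w2`. -/
def bridgeJoin : SimpleGraph (V1 ⊕ V2) where
  Adj x y := match x, y with
    | .inl p, .inl q => G1.Adj p q
    | .inl p, .inr q => p = w1 ∧ q = w2
    | .inr p, .inl q => q = w1 ∧ p = w2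
    | .inr p, .inr q => G2.Adj p q
  symm := by
    constructor
    rintro (p | p) (q | q) h
    · exact h.symm
    · exact h
    · exact h
    · exact h.symm
  loopless := by
    constructor
    rintro (p | p) h
    · exact G1.irrefl h
    · exact G2.irrefl h

variable {G1 G2 w1 w2}

@[simp] lemma bridgeJoin_adj_inl_inl {p q : V1} :
    (bridgeJoin G1 G2 w1 w2).Adj (.inl p) (.inl q) ↔ G1.Adj p q := Iff.rfl
@[simp] lemma bridgeJoin_adj_inl_inr {p : V1} {q : V2} :
    (bridgeJoin G1 G2 w1 w2).Adj (.inl p) (.inr q) ↔ p = w1 ∧ q = w2 := Iff.rfl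
@[simp] lemma bridgeJoin_adj_inr_inl {p : V2} {q : V1} :
    (bridgeJoin G1 G2 w1 w2).Adj (.inr p) (.inl q) ↔ q = w1 ∧ p = w2 := Iff.rfl
@[simp] lemma bridgeJoin_adj_inr_inr {p q : V2} :
    (bridgeJoin G1 G2 w1 w2).Adj (.inr p) (.inr q) ↔ G2.Adj p q := Iff.rfl

lemma seteq1 {s : Finset (V1 ⊕ V2)} (h2 : pre2 s = ∅) :
    (↑s : Set (V1 ⊕ V2)) = Sum.inl '' (↑(pre1 s) : Set V1) := by
  ext x
  rcases x with a | a
  · simp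
  · simp only [Finset.mem_coe, Set.mem_image]
    constructor
    · intro hx
      exact absurd (Finset.eq_empty_iff_forall_notMem.mp h2 a (mem_pre2.mpr hx)) (by simp)
    · rintro ⟨b, -, hb⟩; exact absurd hb (by simp)

lemma seteq2 {s : Finset (V1 ⊕ V2)} (h1 : pre1 s = ∅) :
    (↑s : Set (V1 ⊕ V2)) = Sum.inr '' (↑(pre2 s) : Set V2) := by
  ext x
  rcases x with a | a
  · simp only [Finset.mem_coe, Set.mem_image]
    constructor
    · intro hx
      exact absurd (Finset.eq_empty_iff_forall_notMem.mp h1 a (mem_pre1.mpr hx)) (by simp)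
    · rintro ⟨b, -, hb⟩; exact absurd hb (by simp)
  · simp

lemma bridge_cross {s : Finset (V1 ⊕ V2)}
    (hc : ((bridgeJoin G1 G2 w1 w2).induce (↑s : Set (V1 ⊕ V2))).Connected)
    {x : V1} {y : V2} (hx : Sum.inl x ∈ s) (hy : Sum.inr y ∈ s) :
    Sum.inl w1 ∈ s ∧ Sum.inr w2 ∈ s := by
  obtain ⟨wk⟩ := hc.preconnected ⟨Sum.inl x, hx⟩ ⟨Sum.inr y, hy⟩
  suffices H : ∀ (a b : ↥(↑s : Set (V1 ⊕ V2)))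
      (_ : ((bridgeJoin G1 G2 w1 w2).induce (↑s : Set (V1 ⊕ V2))).Walk a b),
      a.1.isLeft → b.1.isRight → Sum.inl w1 ∈ s ∧ Sum.inr w2 ∈ s by
    exact H _ _ wk (by simp) (by simp)
  intro a b p
  induction p with
  | nil =>
    intro h1 h2
    rw [Sum.isLeft_iff] at h1
    rw [Sum.isRight_iff] at h2
    obtain ⟨xa, hxa⟩ := h1
    obtain ⟨ya, hya⟩ := h2
    rw [hxa] at hya
    exact absurd hya (by simp)
  | @cons a c b h p ih =>
    intro h1 h2
    rcases hcv : c.1 with p1 | p2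
    · exact ih (by simp [hcv]) h2
    · have hadj : (bridgeJoin G1 G2 w1 w2).Adj a.1 c.1 := h
      rcases a with ⟨xa | ya, ha⟩
      · rw [hcv] at hadj
        obtain ⟨h1', h2'⟩ := bridgeJoin_adj_inl_inr.mp hadj
        subst h1' h2'
        refine ⟨ha, ?_⟩
        have := c.2
        rwa [hcv] at this
      · simp at h1

lemma bridge_classify (s : Finset (V1 ⊕ V2)) :
    (s.Nonempty ∧ ((bridgeJoin G1 G2 w1 w2).induce (↑s : Set (V1 ⊕ V2))).Connected) ↔
      ((((pre1 s).Nonempty ∧ (G1.induce (↑(pre1 s) : Set V1)).Connected) ∧ pre2 s = ∅) ∨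
       ((pre1 s = ∅) ∧ ((pre2 s).Nonempty ∧ (G2.induce (↑(pre2 s) : Set V2)).Connected)) ∨
       ((w1 ∈ pre1 s ∧ (G1.induce (↑(pre1 s) : Set V1)).Connected) ∧
         (w2 ∈ pre2 s ∧ (G2.induce (↑(pre2 s) : Set V2)).Connected))) := by
  constructor
  · rintro ⟨hne, hconn⟩
    by_cases h2 : pre2 s = ∅
    · left
      refine ⟨⟨?_, ?_⟩, h2⟩
      · obtain ⟨x, hx⟩ := hne
        rcases x with a | a
        · exact ⟨a, mem_pre1.mpr hx⟩
        · exact absurd (Finset.eq_empty_iff_forall_notMem.mp h2 a (mem_pre2.mpr hx)) (by simp)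
      · rw [seteq1 h2] at hconn
        exact (connected_induce_image_iff Sum.inl Sum.inl_injective (fun _ _ => Iff.rfl) _).mp hconn
    · by_cases h1 : pre1 s = ∅
      · right; left
        refine ⟨h1, ?_, ?_⟩
        · obtain ⟨x, hx⟩ := hne
          rcases x with a | a
          · exact absurd (Finset.eq_empty_iff_forall_notMem.mp h1 a (mem_pre1.mpr hx)) (by simp)
          · exact ⟨a, mem_pre2.mpr hx⟩
        · rw [seteq2 h1] at hconn
          exact (connected_induce_image_iff Sum.inr Sum.inr_injective (fun _ _ => Iff.rfl) _).mp hconn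
      · right; right
        obtain ⟨x, hx⟩ := Finset.nonempty_of_ne_empty h1
        obtain ⟨y, hy⟩ := Finset.nonempty_of_ne_empty h2
        obtain ⟨hw1, hw2⟩ := bridge_cross hconn (mem_pre1.mp hx) (mem_pre2.mp hy)
        have hf1 : ∀ z ∈ (↑s : Set (V1 ⊕ V2)),
            Sum.elim id (fun _ => w1) z ∈ (↑(pre1 s) : Set V1) := by
          rintro (z | z) hz
          · simpa using mem_pre1.mpr hz
          · simpa using mem_pre1.mpr hw1
        have hf2 : ∀ z ∈ (↑s : Set (V1 ⊕ V2)),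
            Sum.elim (fun _ => w2) id z ∈ (↑(pre2 s) : Set V2) := by
          rintro (z | z) hz
          · simpa using mem_pre2.mpr hw2
          · simpa using mem_pre2.mpr hz
        have hadj1 : ∀ x y, x ∈ (↑s : Set (V1 ⊕ V2)) → y ∈ (↑s : Set (V1 ⊕ V2)) →
            (bridgeJoin G1 G2 w1 w2).Adj x y →
            G1.Adj (Sum.elim id (fun _ => w1) x) (Sum.elim id (fun _ => w1) y) ∨
            Sum.elim id (fun _ => w1) x = Sum.elim id (fun _ => w1) y := by
          rintro (p | p) (q | q) _ _ had
          · exact Or.inl had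
          · exact Or.inr (by simp [bridgeJoin_adj_inl_inr.mp had])
          · exact Or.inr (by simp [(bridgeJoin_adj_inr_inl.mp had).1])
          · exact Or.inr rfl
        have hadj2 : ∀ x y, x ∈ (↑s : Set (V1 ⊕ V2)) → y ∈ (↑s : Set (V1 ⊕ V2)) →
            (bridgeJoin G1 G2 w1 w2).Adj x y →
            G2.Adj (Sum.elim (fun _ => w2) id x) (Sum.elim (fun _ => w2) id y) ∨
            Sum.elim (fun _ => w2) id x = Sum.elim (fun _ => w2) id y := by
          rintro (p | p) (q | q) _ _ had
          · exact Or.inr rfl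
          · exact Or.inr (by simp [(bridgeJoin_adj_inl_inr.mp had).2])
          · exact Or.inr (by simp [(bridgeJoin_adj_inr_inl.mp had).2])
          · exact Or.inl had
        refine ⟨⟨mem_pre1.mpr hw1, ?_⟩, mem_pre2.mpr hw2, ?_⟩
        · rw [connected_iff]
          refine ⟨fun p q => ?_, ⟨⟨x, hx⟩⟩⟩
          have hr := hconn.preconnected ⟨Sum.inl p.1, mem_pre1.mp (Finset.mem_coe.mp p.2)⟩
            ⟨Sum.inl q.1, mem_pre1.mp (Finset.mem_coe.mp q.2)⟩
          exact reach_transfer (Sum.elim id (fun _ => w1)) hf1 hadj1 hr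
        · rw [connected_iff]
          refine ⟨fun p q => ?_, ⟨⟨y, hy⟩⟩⟩
          have hr := hconn.preconnected ⟨Sum.inr p.1, mem_pre2.mp (Finset.mem_coe.mp p.2)⟩
            ⟨Sum.inr q.1, mem_pre2.mp (Finset.mem_coe.mp q.2)⟩
          exact reach_transfer (Sum.elim (fun _ => w2) id) hf2 hadj2 hr
  · rintro (⟨⟨hne1, hc1⟩, h2⟩ | ⟨h1, hne2, hc2⟩ | ⟨⟨hm1, hc1⟩, hm2, hc2⟩)
    · obtain ⟨x, hx⟩ := hne1
      refine ⟨⟨Sum.inl x, mem_pre1.mp hx⟩, ?_⟩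
      rw [seteq1 h2]
      exact (connected_induce_image_iff Sum.inl Sum.inl_injective (fun _ _ => Iff.rfl) _).mpr hc1
    · obtain ⟨y, hy⟩ := hne2
      refine ⟨⟨Sum.inr y, mem_pre2.mp hy⟩, ?_⟩
      rw [seteq2 h1]
      exact (connected_induce_image_iff Sum.inr Sum.inr_injective (fun _ _ => Iff.rfl) _).mpr hc2
    · refine ⟨⟨Sum.inl w1, mem_pre1.mp hm1⟩, ?_⟩
      apply connected_of_reach_root ⟨Sum.inl w1, mem_pre1.mp hm1⟩
      have hfL : ∀ z ∈ (↑(pre1 s) : Set V1), Sum.inl z ∈ (↑s : Set (V1 ⊕ V2)) := by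
        intro z hz; exact mem_pre1.mp hz
      have hfR : ∀ z ∈ (↑(pre2 s) : Set V2), Sum.inr z ∈ (↑s : Set (V1 ⊕ V2)) := by
        intro z hz; exact mem_pre2.mp hz
      have hadjL : ∀ x y, x ∈ (↑(pre1 s) : Set V1) → y ∈ (↑(pre1 s) : Set V1) → G1.Adj x y →
          (bridgeJoin G1 G2 w1 w2).Adj (Sum.inl x) (Sum.inl y) ∨ Sum.inl x = (Sum.inl y : V1 ⊕ V2) :=
        fun x y _ _ h => Or.inl h
      have hadjR : ∀ x y, x ∈ (↑(pre2 s) : Set V2) → y ∈ (↑(pre2 s) : Set V2) → G2.Adj x y →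
          (bridgeJoin G1 G2 w1 w2).Adj (Sum.inr x) (Sum.inr y) ∨ (Sum.inr x : V1 ⊕ V2) = Sum.inr y :=
        fun x y _ _ h => Or.inl h
      rintro ⟨p | q, hz⟩
      · have hr := hc1.preconnected ⟨p, mem_pre1.mpr hz⟩ ⟨w1, hm1⟩
        exact reach_transfer Sum.inl hfL hadjL hr
      · have hr := hc2.preconnected ⟨q, mem_pre2.mpr hz⟩ ⟨w2, hm2⟩
        have r1 := reach_transfer Sum.inr hfR hadjR hr
        have r2 : ((bridgeJoin G1 G2 w1 w2).induce (↑s : Set (V1 ⊕ V2))).Adj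
            ⟨Sum.inr w2, mem_pre2.mp hm2⟩ ⟨Sum.inl w1, mem_pre1.mp hm1⟩ := ⟨rfl, rfl⟩
        exact r1.trans r2.reachable

end Bridge

instance finset_finite {α : Type*} [Finite α] : Finite (Finset α) := by
  classical
  haveI := Fintype.ofFinite α
  infer_instance

section BridgeCount
variable {V1 V2 : Type*} [Finite V1] [Finite V2]
variable (G1 : SimpleGraph V1) (G2 : SimpleGraph V2) (w1 : V1) (w2 : V2)

lemma numCIS_bridgeJoin :
    numCIS (bridgeJoin G1 G2 w1 w2) =
      numCIS G1 + numCIS G2 + numCISat G1 w1 * numCISat G2 w2 := by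
  unfold numCIS numCISat
  rw [Nat.card_congr (Equiv.subtypeEquivRight (fun s => bridge_classify (G1 := G1) (G2 := G2)
    (w1 := w1) (w2 := w2) s))]
  rw [card_subtype_or (by
    rintro s ⟨-, h2⟩ (⟨-, hne, -⟩ | ⟨-, hw2, -⟩)
    · exact absurd (h2 ▸ hne) Finset.not_nonempty_empty
    · exact absurd (h2 ▸ hw2) (Finset.notMem_empty w2))]
  rw [card_subtype_or (by
    rintro s ⟨h1, -⟩ ⟨⟨hw1, -⟩, -⟩
    exact absurd (h1 ▸ hw1) (Finset.notMem_empty w1))]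
  rw [card_pair (V1 := V1) (V2 := V2)
      (fun t => t.Nonempty ∧ (G1.induce (↑t : Set V1)).Connected) (fun t => t = ∅),
    card_pair (V1 := V1) (V2 := V2)
      (fun t => t = ∅) (fun t => t.Nonempty ∧ (G2.induce (↑t : Set V2)).Connected),
    card_pair (V1 := V1) (V2 := V2)
      (fun t => w1 ∈ t ∧ (G1.induce (↑t : Set V1)).Connected)
      (fun t => w2 ∈ t ∧ (G2.induce (↑t : Set V2)).Connected),
    card_empty_finset, card_empty_finset]
  ring

lemma numCISat_bridgeJoin_inl (x : V1) :
    numCISat (bridgeJoin G1 G2 w1 w2) (Sum.inl x) =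
      numCISat G1 x + numCISat2 G1 x w1 * numCISat G2 w2 := by
  unfold numCISat numCISat2
  have key : ∀ s : Finset (V1 ⊕ V2),
      (Sum.inl x ∈ s ∧ ((bridgeJoin G1 G2 w1 w2).induce (↑s : Set (V1 ⊕ V2))).Connected) ↔
      (((x ∈ pre1 s ∧ (G1.induce (↑(pre1 s) : Set V1)).Connected) ∧ pre2 s = ∅) ∨
       ((x ∈ pre1 s ∧ w1 ∈ pre1 s ∧ (G1.induce (↑(pre1 s) : Set V1)).Connected) ∧
        (w2 ∈ pre2 s ∧ (G2.induce (↑(pre2 s) : Set V2)).Connected))) := by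
    intro s
    constructor
    · rintro ⟨hm, hconn⟩
      rcases (bridge_classify s).mp ⟨⟨_, hm⟩, hconn⟩ with ⟨⟨-, hc⟩, h2⟩ | ⟨h1, -⟩ | ⟨⟨hw, hc⟩, h3⟩
      · exact Or.inl ⟨⟨mem_pre1.mpr hm, hc⟩, h2⟩
      · exact absurd (h1 ▸ mem_pre1.mpr hm) (Finset.notMem_empty x)
      · exact Or.inr ⟨⟨mem_pre1.mpr hm, hw, hc⟩, h3⟩
    · rintro (⟨⟨hx, hc⟩, h2⟩ | ⟨⟨hx, hw, hc⟩, h3⟩)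
      · exact ⟨mem_pre1.mp hx, ((bridge_classify s).mpr (Or.inl ⟨⟨⟨x, hx⟩, hc⟩, h2⟩)).2⟩
      · exact ⟨mem_pre1.mp hx, ((bridge_classify s).mpr (Or.inr (Or.inr ⟨⟨hw, hc⟩, h3⟩))).2⟩
  rw [Nat.card_congr (Equiv.subtypeEquivRight key)]
  rw [card_subtype_or (by
    rintro s ⟨-, h2⟩ ⟨-, hw2, -⟩
    exact absurd (h2 ▸ hw2) (Finset.notMem_empty w2))]
  rw [card_pair (V1 := V1) (V2 := V2)
      (fun t => x ∈ t ∧ (G1.induce (↑t : Set V1)).Connected) (fun t => t = ∅),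
    card_pair (V1 := V1) (V2 := V2)
      (fun t => x ∈ t ∧ w1 ∈ t ∧ (G1.induce (↑t : Set V1)).Connected)
      (fun t => w2 ∈ t ∧ (G2.induce (↑t : Set V2)).Connected),
    card_empty_finset]
  ring

lemma numCISat_bridgeJoin_inr (y : V2) :
    numCISat (bridgeJoin G1 G2 w1 w2) (Sum.inr y) =
      numCISat G2 y + numCISat G1 w1 * numCISat2 G2 y w2 := by
  unfold numCISat numCISat2
  have key : ∀ s : Finset (V1 ⊕ V2),
      (Sum.inr y ∈ s ∧ ((bridgeJoin G1 G2 w1 w2).induce (↑s : Set (V1 ⊕ V2))).Connected) ↔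
      ((pre1 s = ∅ ∧ (y ∈ pre2 s ∧ (G2.induce (↑(pre2 s) : Set V2)).Connected)) ∨
       ((w1 ∈ pre1 s ∧ (G1.induce (↑(pre1 s) : Set V1)).Connected) ∧
        (y ∈ pre2 s ∧ w2 ∈ pre2 s ∧ (G2.induce (↑(pre2 s) : Set V2)).Connected))) := by
    intro s
    constructor
    · rintro ⟨hm, hconn⟩
      rcases (bridge_classify s).mp ⟨⟨_, hm⟩, hconn⟩ with ⟨-, h2⟩ | ⟨h1, -, hc⟩ | ⟨h3, hw, hc⟩
      · exact absurd (h2 ▸ mem_pre2.mpr hm) (Finset.notMem_empty y)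
      · exact Or.inl ⟨h1, mem_pre2.mpr hm, hc⟩
      · exact Or.inr ⟨h3, mem_pre2.mpr hm, hw, hc⟩
    · rintro (⟨h1, hy, hc⟩ | ⟨h3, hy, hw, hc⟩)
      · exact ⟨mem_pre2.mp hy, ((bridge_classify s).mpr (Or.inr (Or.inl ⟨h1, ⟨y, hy⟩, hc⟩))).2⟩
      · exact ⟨mem_pre2.mp hy, ((bridge_classify s).mpr (Or.inr (Or.inr ⟨h3, hw, hc⟩))).2⟩
  rw [Nat.card_congr (Equiv.subtypeEquivRight key)]
  rw [card_subtype_or (by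
    rintro s ⟨h1, -⟩ ⟨⟨hw1, -⟩, -⟩
    exact absurd (h1 ▸ hw1) (Finset.notMem_empty w1))]
  rw [card_pair (V1 := V1) (V2 := V2) (fun t => t = ∅)
      (fun t => y ∈ t ∧ (G2.induce (↑t : Set V2)).Connected),
    card_pair (V1 := V1) (V2 := V2)
      (fun t => w1 ∈ t ∧ (G1.induce (↑t : Set V1)).Connected)
      (fun t => y ∈ t ∧ w2 ∈ t ∧ (G2.induce (↑t : Set V2)).Connected),
    card_empty_finset]
  ring

lemma numCISat2_bridgeJoin_inl_inr (x : V1) (y : V2) :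
    numCISat2 (bridgeJoin G1 G2 w1 w2) (Sum.inl x) (Sum.inr y) =
      numCISat2 G1 x w1 * numCISat2 G2 y w2 := by
  unfold numCISat2
  have key : ∀ s : Finset (V1 ⊕ V2),
      (Sum.inl x ∈ s ∧ Sum.inr y ∈ s ∧
        ((bridgeJoin G1 G2 w1 w2).induce (↑s : Set (V1 ⊕ V2))).Connected) ↔
      ((x ∈ pre1 s ∧ w1 ∈ pre1 s ∧ (G1.induce (↑(pre1 s) : Set V1)).Connected) ∧
       (y ∈ pre2 s ∧ w2 ∈ pre2 s ∧ (G2.induce (↑(pre2 s) : Set V2)).Connected)) := by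
    intro s
    constructor
    · rintro ⟨hmx, hmy, hconn⟩
      rcases (bridge_classify s).mp ⟨⟨_, hmx⟩, hconn⟩ with ⟨-, h2⟩ | ⟨h1, -⟩ | ⟨⟨hw1, hc1⟩, hw2, hc2⟩
      · exact absurd (h2 ▸ mem_pre2.mpr hmy) (Finset.notMem_empty y)
      · exact absurd (h1 ▸ mem_pre1.mpr hmx) (Finset.notMem_empty x)
      · exact ⟨⟨mem_pre1.mpr hmx, hw1, hc1⟩, mem_pre2.mpr hmy, hw2, hc2⟩
    · rintro ⟨⟨hx, hw1, hc1⟩, hy, hw2, hc2⟩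
      exact ⟨mem_pre1.mp hx, mem_pre2.mp hy,
        ((bridge_classify s).mpr (Or.inr (Or.inr ⟨⟨hw1, hc1⟩, hw2, hc2⟩))).2⟩
  rw [Nat.card_congr (Equiv.subtypeEquivRight key)]
  rw [card_pair (V1 := V1) (V2 := V2)
      (fun t => x ∈ t ∧ w1 ∈ t ∧ (G1.induce (↑t : Set V1)).Connected)
      (fun t => y ∈ t ∧ w2 ∈ t ∧ (G2.induce (↑t : Set V2)).Connected)]

end BridgeCount

lemma numCISat2_self {V : Type*} (G : SimpleGraph V) (x : V) :
    numCISat2 G x x = numCISat G x := by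
  unfold numCISat2 numCISat
  exact Nat.card_congr (Equiv.subtypeEquivRight (fun s => by tauto))

section IsoCongr
variable {V W : Type*} {G : SimpleGraph V} {H : SimpleGraph W}

lemma conn_map_iff (φ : G ≃g H) (s : Finset V) :
    (H.induce (↑(s.map φ.toEquiv.toEmbedding) : Set W)).Connected ↔
      (G.induce (↑s : Set V)).Connected := by
  rw [Finset.coe_map]
  exact connected_induce_image_iff φ φ.toEquiv.injective (fun x y => φ.map_rel_iff) _

lemma numCIS_congr (φ : G ≃g H) : numCIS G = numCIS H := by
  unfold numCIS
  refine Nat.card_congr (Equiv.subtypeEquiv (Equiv.finsetCongr φ.toEquiv) (fun s => ?_))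
  simp only [Equiv.finsetCongr_apply]
  exact and_congr (Finset.map_nonempty).symm (conn_map_iff φ s).symm

lemma numCISat_congr (φ : G ≃g H) (x : V) : numCISat G x = numCISat H (φ x) := by
  unfold numCISat
  refine Nat.card_congr (Equiv.subtypeEquiv (Equiv.finsetCongr φ.toEquiv) (fun s => ?_))
  simp only [Equiv.finsetCongr_apply]
  exact and_congr (Finset.mem_map' _).symm (conn_map_iff φ s).symm

lemma numCISat2_congr (φ : G ≃g H) (x y : V) :
    numCISat2 G x y = numCISat2 H (φ x) (φ y) := by
  unfold numCISat2
  refine Nat.card_congr (Equiv.subtypeEquiv (Equiv.finsetCongr φ.toEquiv) (fun s => ?_))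
  simp only [Equiv.finsetCongr_apply]
  exact and_congr (Finset.mem_map' _).symm
    (and_congr (Finset.mem_map' _).symm (conn_map_iff φ s).symm)

end IsoCongr

lemma connected_induce_singleton {V : Type*} (G : SimpleGraph V) (x : V) :
    (G.induce (↑({x} : Finset V) : Set V)).Connected := by
  rw [connected_iff]
  refine ⟨fun a b => ?_, ⟨⟨x, by simp⟩⟩⟩
  have : a = b := Subtype.ext (by
    have ha := a.2
    have hb := b.2
    simp only [Finset.coe_singleton, Set.mem_singleton_iff] at ha hb
    rw [ha, hb])
  rw [this]

lemma numCIS_bot_unit : numCIS (⊥ : SimpleGraph Unit) = 1 := by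
  unfold numCIS
  haveI : Nonempty {s : Finset Unit // s.Nonempty ∧
      ((⊥ : SimpleGraph Unit).induce (↑s : Set Unit)).Connected} :=
    ⟨⟨{()}, ⟨(), by simp⟩, connected_induce_singleton _ ()⟩⟩
  haveI : Subsingleton {s : Finset Unit // s.Nonempty ∧
      ((⊥ : SimpleGraph Unit).induce (↑s : Set Unit)).Connected} := by
    constructor
    rintro ⟨s, ⟨a, ha⟩, -⟩ ⟨t, ⟨b, hb⟩, -⟩
    apply Subtype.ext
    ext x
    cases x; cases a; cases b
    simp [ha, hb]
  exact Nat.card_unique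

lemma numCISat_bot_unit : numCISat (⊥ : SimpleGraph Unit) () = 1 := by
  unfold numCISat
  haveI : Nonempty {s : Finset Unit // () ∈ s ∧
      ((⊥ : SimpleGraph Unit).induce (↑s : Set Unit)).Connected} :=
    ⟨⟨{()}, by simp, connected_induce_singleton _ ()⟩⟩
  haveI : Subsingleton {s : Finset Unit // () ∈ s ∧
      ((⊥ : SimpleGraph Unit).induce (↑s : Set Unit)).Connected} := by
    constructor
    rintro ⟨s, ha, -⟩ ⟨t, hb, -⟩
    apply Subtype.ext
    ext x
    cases x
    simp [ha, hb]
  exact Nat.card_unique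

section Chain
variable {V : Type*} (G : SimpleGraph V) (w : V)

/-- `G` with a pendant path (chain) of `k` new vertices attached at `w`. -/
def chain (k : ℕ) : SimpleGraph (V ⊕ Fin k) where
  Adj x y := match x, y with
    | .inl p, .inl q => G.Adj p q
    | .inl p, .inr i => p = w ∧ (i : ℕ) = 0
    | .inr i, .inl q => q = w ∧ (i : ℕ) = 0
    | .inr i, .inr j => (i : ℕ) + 1 = (j : ℕ) ∨ (j : ℕ) + 1 = (i : ℕ)
  symm := by
    constructor
    rintro (p | i) (q | j) h
    · exact h.symm
    · exact h
    · exact h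
    · exact Or.symm h
  loopless := by
    constructor
    rintro (p | i) h
    · exact G.irrefl h
    · rcases h with h | h <;> omega

/-- The end vertex of the pendant chain (`w` itself if the chain is empty). -/
def chainTip (k : ℕ) : V ⊕ Fin k :=
  if h : 0 < k then Sum.inr ⟨k - 1, Nat.sub_lt h Nat.one_pos⟩ else Sum.inl w

variable {G w}

@[simp] lemma chain_adj_inl_inl {k : ℕ} {p q : V} :
    (chain G w k).Adj (.inl p) (.inl q) ↔ G.Adj p q := Iff.rfl
@[simp] lemma chain_adj_inl_inr {k : ℕ} {p : V} {i : Fin k} :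
    (chain G w k).Adj (.inl p) (.inr i) ↔ p = w ∧ (i : ℕ) = 0 := Iff.rfl
@[simp] lemma chain_adj_inr_inl {k : ℕ} {q : V} {i : Fin k} :
    (chain G w k).Adj (.inr i) (.inl q) ↔ q = w ∧ (i : ℕ) = 0 := Iff.rfl
@[simp] lemma chain_adj_inr_inr {k : ℕ} {i j : Fin k} :
    (chain G w k).Adj (.inr i) (.inr j) ↔ (i : ℕ) + 1 = (j : ℕ) ∨ (j : ℕ) + 1 = (i : ℕ) := Iff.rfl

/-- The empty chain is just `G`. -/
def chainZeroIso : chain G w 0 ≃g G := by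
  refine ⟨Equiv.sumEmpty V (Fin 0), ?_⟩
  rintro (p | i) (q | j)
  · simp [Equiv.sumEmpty]
  · exact j.elim0
  · exact i.elim0
  · exact i.elim0

/-- Extending the chain by one vertex is a bridge join with a single new vertex. -/
def chainSuccIso (k : ℕ) : chain G w (k + 1) ≃g
    bridgeJoin (chain G w k) (⊥ : SimpleGraph Unit) (chainTip w k) () := by
  refine ⟨⟨fun x => match x with
      | .inl v => .inl (.inl v)
      | .inr i => if h : (i : ℕ) < k then .inl (.inr ⟨i, h⟩) else .inr (),
    fun x => match x with
      | .inl (.inl v) => .inl v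
      | .inl (.inr j) => .inr ⟨j, by omega⟩
      | .inr _ => .inr ⟨k, lt_add_one k⟩, ?_, ?_⟩, ?_⟩
  · rintro (v | i)
    · rfl
    · by_cases h : (i : ℕ) < k
      · simp only [dif_pos h]
      · simp only [dif_neg h]
        have : (i : ℕ) = k := by omega
        exact congrArg Sum.inr (Fin.ext this.symm)
  · rintro ((v | j) | u)
    · rfl
    · simp only [dif_pos j.isLt]
    · simp only [dif_neg (lt_irrefl k)]
  · rintro (p | i) (q | j)
    · exact Iff.rfl
    · by_cases hj : (j : ℕ) < k
      · simp only [Equiv.coe_fn_mk, dif_pos hj]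
        exact Iff.rfl
      · have hjk : (j : ℕ) = k := by omega
        simp only [Equiv.coe_fn_mk, dif_neg hj]
        show (Sum.inl p = chainTip w k ∧ () = ()) ↔ (p = w ∧ (j : ℕ) = 0)
        unfold chainTip
        by_cases hk : 0 < k
        · rw [dif_pos hk]
          simp only [reduceCtorEq, false_and, false_iff]
          rintro ⟨-, h0⟩
          omega
        · rw [dif_neg hk]
          have : k = 0 := by omega
          simp [Sum.inl.injEq, this, hjk]
    · by_cases hi : (i : ℕ) < k
      · simp only [Equiv.coe_fn_mk, dif_pos hi]
        exact Iff.rfl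
      · have hik : (i : ℕ) = k := by omega
        simp only [Equiv.coe_fn_mk, dif_neg hi]
        show (Sum.inl q = chainTip w k ∧ () = ()) ↔ (q = w ∧ (i : ℕ) = 0)
        unfold chainTip
        by_cases hk : 0 < k
        · rw [dif_pos hk]
          simp only [reduceCtorEq, false_and, false_iff]
          rintro ⟨-, h0⟩
          omega
        · rw [dif_neg hk]
          have : k = 0 := by omega
          simp [Sum.inl.injEq, this, hik]
    · by_cases hi : (i : ℕ) < k <;> by_cases hj : (j : ℕ) < k
      · simp only [Equiv.coe_fn_mk, dif_pos hi, dif_pos hj]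
        show ((i : ℕ) + 1 = (j : ℕ) ∨ (j : ℕ) + 1 = (i : ℕ)) ↔ _
        exact Iff.rfl
      · have hjk : (j : ℕ) = k := by omega
        simp only [Equiv.coe_fn_mk, dif_pos hi, dif_neg hj]
        show (Sum.inr (⟨i, hi⟩ : Fin k) = chainTip w k ∧ () = ()) ↔
          ((i : ℕ) + 1 = (j : ℕ) ∨ (j : ℕ) + 1 = (i : ℕ))
        unfold chainTip
        rw [dif_pos (by omega : 0 < k)]
        simp only [Sum.inr.injEq, Fin.mk.injEq, and_true]
        omega
      · have hik : (i : ℕ) = k := by omega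
        simp only [Equiv.coe_fn_mk, dif_neg hi, dif_pos hj]
        show (Sum.inr (⟨j, hj⟩ : Fin k) = chainTip w k ∧ () = ()) ↔
          ((i : ℕ) + 1 = (j : ℕ) ∨ (j : ℕ) + 1 = (i : ℕ))
        unfold chainTip
        rw [dif_pos (by omega : 0 < k)]
        simp only [Sum.inr.injEq, Fin.mk.injEq, and_true]
        omega
      · have hik : (i : ℕ) = k := by omega
        have hjk : (j : ℕ) = k := by omega
        simp only [Equiv.coe_fn_mk, dif_neg hi, dif_neg hj]
        show False ↔ ((i : ℕ) + 1 = (j : ℕ) ∨ (j : ℕ) + 1 = (i : ℕ))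
        constructor
        · exact False.elim
        · intro h; omega

end Chain

section ChainCount
variable {V : Type*} [Finite V] {G : SimpleGraph V} {w : V}

lemma chainTip_zero : chainTip (V := V) w 0 = Sum.inl w := by
  unfold chainTip
  rw [dif_neg (lt_irrefl 0)]

lemma chainTip_succ (k : ℕ) : chainTip (V := V) w (k + 1) = Sum.inr ⟨k, lt_add_one k⟩ := by
  unfold chainTip
  rw [dif_pos (Nat.succ_pos k)]
  rfl

lemma chainSuccIso_tip (k : ℕ) :
    (chainSuccIso (G := G) (w := w) k) (chainTip w (k + 1)) = Sum.inr () := by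
  rw [chainTip_succ]
  show (if h : k < k then (Sum.inl (Sum.inr ⟨k, h⟩) : (V ⊕ Fin k) ⊕ Unit) else Sum.inr ())
    = Sum.inr ()
  rw [dif_neg (lt_irrefl k)]

lemma chainSuccIso_inl (k : ℕ) (x : V) :
    (chainSuccIso (G := G) (w := w) k) (Sum.inl x) = Sum.inl (Sum.inl x) := rfl

lemma chainZeroIso_inl (x : V) : (chainZeroIso (G := G) (w := w)) (Sum.inl x) = x := rfl

lemma numCISat2_bot_unit : numCISat2 (⊥ : SimpleGraph Unit) () () = 1 := by
  rw [numCISat2_self]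
  exact numCISat_bot_unit

lemma chain_count_tip (k : ℕ) :
    numCISat (chain G w k) (chainTip w k) = numCISat G w + k := by
  induction k with
  | zero =>
    rw [chainTip_zero, numCISat_congr chainZeroIso (Sum.inl w), chainZeroIso_inl]
    omega
  | succ k ih =>
    rw [numCISat_congr (chainSuccIso k) (chainTip w (k + 1)), chainSuccIso_tip,
      numCISat_bridgeJoin_inr, numCISat_bot_unit, numCISat2_bot_unit, ih]
    ring

lemma chain_count_at2 (k : ℕ) :
    numCISat2 (chain G w k) (Sum.inl w) (chainTip w k) = numCISat G w := by
  induction k with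
  | zero =>
    rw [chainTip_zero, numCISat2_self, numCISat_congr chainZeroIso (Sum.inl w), chainZeroIso_inl]
  | succ k ih =>
    rw [numCISat2_congr (chainSuccIso k) (Sum.inl w) (chainTip w (k + 1)), chainSuccIso_tip,
      chainSuccIso_inl, numCISat2_bridgeJoin_inl_inr, numCISat2_bot_unit, ih, mul_one]

lemma chain_count_w (k : ℕ) :
    numCISat (chain G w k) (Sum.inl w) = (k + 1) * numCISat G w := by
  induction k with
  | zero =>
    rw [numCISat_congr chainZeroIso (Sum.inl w), chainZeroIso_inl]
    omega
  | succ k ih =>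
    rw [numCISat_congr (chainSuccIso k) (Sum.inl w), chainSuccIso_inl,
      numCISat_bridgeJoin_inl, chain_count_at2, numCISat_bot_unit, ih]
    ring

lemma chain_count_cis (k : ℕ) :
    2 * numCIS (chain G w k) = 2 * numCIS G + 2 * k * numCISat G w + k * (k + 1) := by
  induction k with
  | zero =>
    rw [numCIS_congr chainZeroIso]
    ring
  | succ k ih =>
    have step : numCIS (chain G w (k + 1)) =
        numCIS (chain G w k) + 1 + (numCISat G w + k) := by
      rw [numCIS_congr (chainSuccIso k), numCIS_bridgeJoin, numCIS_bot_unit,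
        numCISat_bot_unit, chain_count_tip]
      ring
    have h2 : 2 * numCIS (chain G w (k + 1)) =
        2 * numCIS (chain G w k) + 2 + 2 * numCISat G w + 2 * k := by
      rw [step]; ring
    rw [h2, ih]; ring

end ChainCount
def mainIso {VA VB : Type*} (A : SimpleGraph VA) (B : SimpleGraph VB) (u : VA) (v : VB)
    (a b : ℕ) : ABjoin A B u v a b ≃g
      bridgeJoin (chain A u a) (chain B v b) (Sum.inl u) (chainTip v b) := by
  refine ⟨⟨fun x => match x with
      | .inl p => .inl (.inl p)
      | .inr (.inl q) => .inr (.inl q)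
      | .inr (.inr (.inl i)) => .inl (.inr i)
      | .inr (.inr (.inr j)) => .inr (.inr ⟨b - 1 - (j : ℕ), by omega⟩),
    fun x => match x with
      | .inl (.inl p) => .inl p
      | .inl (.inr i) => .inr (.inr (.inl i))
      | .inr (.inl q) => .inr (.inl q)
      | .inr (.inr j) => .inr (.inr (.inr ⟨b - 1 - (j : ℕ), by omega⟩)),
    ?_, ?_⟩, ?_⟩
  · rintro (p | q | i | j)
    · rfl
    · rfl
    · rfl
    · have hj := j.isLt
      refine congrArg (fun t => Sum.inr (Sum.inr (Sum.inr t))) (Fin.ext ?_)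
      show b - 1 - (b - 1 - (j : ℕ)) = (j : ℕ)
      omega
  · rintro ((p | i) | (q | j))
    · rfl
    · rfl
    · rfl
    · have hj := j.isLt
      refine congrArg (fun t => Sum.inr (Sum.inr t)) (Fin.ext ?_)
      show b - 1 - (b - 1 - (j : ℕ)) = (j : ℕ)
      omega
  · intro x y
    obtain p | q | i | j := x <;> obtain p' | q' | i' | j' := y <;>
      simp only [Equiv.coe_fn_mk, ABjoin, fromRel_adj, bridgeJoin, chain, chainTip,
        Sum.inl.injEq, Sum.inr.injEq, reduceCtorEq, exists_and_left, exists_eq_left,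
        exists_eq_left', false_and, and_false, false_or, or_false, exists_false,
        exists_prop, ne_eq, not_false_eq_true, true_and, and_true, Fin.mk.injEq]
    -- 12 remaining goals
    · exact ⟨fun h => ⟨h.ne, Or.inl h⟩, fun h => h.2.elim id fun h' => h'.symm⟩
    · by_cases hb : 0 < b
      · rw [dif_pos hb]
        constructor
        · rintro ⟨-, h⟩; exact absurd h (by simp)
        · rintro ⟨h0, -, -⟩; omega
      · rw [dif_neg hb]
        constructor
        · rintro ⟨h1, h2⟩
          exact ⟨by omega, h1, by injection h2⟩
        · rintro ⟨-, h1, h2⟩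
          exact ⟨h1, by rw [h2]⟩
    · constructor
      · rintro ⟨h1, h2⟩
        exact ⟨h1, i'.pos, Fin.ext h2⟩
      · rintro ⟨h1, hx, h2⟩
        exact ⟨h1, by rw [h2]⟩
    · have hb : 0 < b := j'.pos
      have hj := j'.isLt
      rw [dif_pos hb]
      simp only [Sum.inr.injEq, Fin.mk.injEq, Fin.ext_iff]
      constructor
      · rintro ⟨h1, h2⟩
        exact ⟨h1, hb, by omega⟩
      · rintro ⟨h1, -, h2⟩
        exact ⟨h1, by omega⟩
    · by_cases hb : 0 < b
      · rw [dif_pos hb]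
        constructor
        · rintro ⟨-, h⟩; exact absurd h (by simp)
        · rintro ⟨h0, -, -⟩; omega
      · rw [dif_neg hb]
        constructor
        · rintro ⟨h1, h2⟩
          exact ⟨by omega, h1, by injection h2⟩
        · rintro ⟨-, h1, h2⟩
          exact ⟨h1, by rw [h2]⟩
    · exact ⟨fun h => ⟨h.ne, Or.inl h⟩, fun h => h.2.elim id fun h' => h'.symm⟩
    · have hb : 0 < b := j'.pos
      have hj := j'.isLt
      simp only [Fin.ext_iff]
      constructor
      · rintro ⟨h1, h2⟩
        exact ⟨hb, by omega, h1⟩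
      · rintro ⟨-, h2, h1⟩
        exact ⟨h1, by omega⟩
    · constructor
      · rintro ⟨h1, h2⟩
        exact ⟨h1, i.pos, Fin.ext h2⟩
      · rintro ⟨h1, hx, h2⟩
        exact ⟨h1, by rw [h2]⟩
    · have := i.isLt
      have := i'.isLt
      simp only [Fin.ext_iff]
      omega
    · have hb : 0 < b := j.pos
      have hj := j.isLt
      rw [dif_pos hb]
      simp only [Sum.inr.injEq, Fin.mk.injEq, Fin.ext_iff]
      constructor
      · rintro ⟨h1, h2⟩
        exact ⟨h1, hb, by omega⟩
      · rintro ⟨h1, -, h2⟩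
        exact ⟨h1, by omega⟩
    · have hb : 0 < b := j.pos
      have hj := j.isLt
      simp only [Fin.ext_iff]
      constructor
      · rintro ⟨h1, h2⟩
        exact ⟨hb, by omega, h1⟩
      · rintro ⟨-, h2, h1⟩
        exact ⟨h1, by omega⟩
    · have := j.isLt
      have := j'.isLt
      simp only [Fin.ext_iff]
      omega

lemma two_mul_numCIS_ABjoin {VA VB : Type*} [Finite VA] [Finite VB]
    (A : SimpleGraph VA) (B : SimpleGraph VB) (u : VA) (v : VB) (a b : ℕ) :
    2 * numCIS (ABjoin A B u v a b) =
      2 * numCIS A + 2 * a * numCISat A u + a * (a + 1) +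
      (2 * numCIS B + 2 * b * numCISat B v + b * (b + 1)) +
      2 * ((a + 1) * numCISat A u) * (numCISat B v + b) := by
  rw [numCIS_congr (mainIso A B u v a b), numCIS_bridgeJoin, chain_count_w, chain_count_tip]
  rw [mul_add, mul_add, chain_count_cis, chain_count_cis]
  ring

lemma two_le_numCISat {V : Type*} [Fintype V] (G : SimpleGraph V) (hG : G.Connected)
    (hc : 2 ≤ Fintype.card V) (u : V) : 2 ≤ numCISat G u := by
  classical
  obtain ⟨w, hw⟩ := Fintype.exists_ne_of_one_lt_card hc u
  have c1 : (G.induce (↑({u} : Finset V) : Set V)).Connected := connected_induce_singleton G u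
  have c2 : (G.induce (↑(Finset.univ : Finset V) : Set V)).Connected := by
    rw [Finset.coe_univ]
    exact (induceUnivIso G).connected_iff.mpr hG
  have hne : ({u} : Finset V) ≠ Finset.univ := by
    intro h
    have : w ∈ ({u} : Finset V) := h ▸ Finset.mem_univ w
    simp only [Finset.mem_singleton] at this
    exact hw this
  haveI : Nontrivial {s : Finset V // u ∈ s ∧ (G.induce (↑s : Set V)).Connected} := by
    refine ⟨⟨⟨{u}, by simp, c1⟩, ⟨Finset.univ, Finset.mem_univ u, c2⟩, ?_⟩⟩
    simp only [ne_eq, Subtype.mk.injEq]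
    exact hne
  exact Finite.one_lt_card_iff_nontrivial.mpr this
/-- With `G(n1, n2) = ABjoin A B u v (n1 - 1) (n2 - 2)` (pendant path of order `n1` at
`u` and a `u`–`v` connecting path of order `n2`),
`N(G(n1-1, n2+1)) - N(G(n1, n2)) = (N(A)_u - 1)(n1 - n2 - N(B)_v)`; in particular
`N(G(n1-1, n2+1)) > N(G(n1, n2))` iff `N(B)_v < n1 - n2`. -/
theorem numCIS_ABjoin_shift_left {VA VB : Type*} [Fintype VA] [Fintype VB]
    (A : SimpleGraph VA) (B : SimpleGraph VB) (hA : A.Connected) (hB : B.Connected)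
    (hcard : 2 ≤ Fintype.card VA) (u : VA) (v : VB) (n1 n2 : ℕ)
    (h1 : 1 < n1) (h2 : 1 < n2) :
    ((numCIS (ABjoin A B u v (n1 - 2) (n2 - 1)) : ℤ) -
        numCIS (ABjoin A B u v (n1 - 1) (n2 - 2)) =
      ((numCISat A u : ℤ) - 1) * ((n1 : ℤ) - (n2 : ℤ) - numCISat B v)) ∧
    (numCIS (ABjoin A B u v (n1 - 1) (n2 - 2)) <
        numCIS (ABjoin A B u v (n1 - 2) (n2 - 1)) ↔
      (numCISat B v : ℤ) < (n1 : ℤ) - (n2 : ℤ)) := by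

  obtain ⟨c, rfl⟩ : ∃ c, n1 = c + 2 := ⟨n1 - 2, by omega⟩
  obtain ⟨d, rfl⟩ : ∃ d, n2 = d + 2 := ⟨n2 - 2, by omega⟩
  have e1 : c + 2 - 2 = c := by omega
  have e2 : d + 2 - 1 = d + 1 := by omega
  have e3 : c + 2 - 1 = c + 1 := by omega
  have e4 : d + 2 - 2 = d := by omega
  rw [e1, e2, e3, e4]
  have f1 := two_mul_numCIS_ABjoin A B u v c (d + 1)
  have f2 := two_mul_numCIS_ABjoin A B u v (c + 1) d
  have g1 : 2 * (numCIS (ABjoin A B u v c (d + 1)) : ℤ) =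
      2 * numCIS A + 2 * c * numCISat A u + c * (c + 1) +
      (2 * numCIS B + 2 * (d + 1) * numCISat B v + (d + 1) * (d + 2)) +
      2 * ((c + 1) * numCISat A u) * (numCISat B v + (d + 1)) := by exact_mod_cast f1
  have g2 : 2 * (numCIS (ABjoin A B u v (c + 1) d) : ℤ) =
      2 * numCIS A + 2 * (c + 1) * numCISat A u + (c + 1) * (c + 2) +
      (2 * numCIS B + 2 * d * numCISat B v + d * (d + 1)) +
      2 * ((c + 2) * numCISat A u) * (numCISat B v + d) := by exact_mod_cast f2
  have key2 : 2 * ((numCIS (ABjoin A B u v c (d + 1)) : ℤ) -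
      numCIS (ABjoin A B u v (c + 1) d)) =
      2 * (((numCISat A u : ℤ) - 1) * ((c : ℤ) - d - numCISat B v)) := by
    linear_combination g1 - g2
  have key : (numCIS (ABjoin A B u v c (d + 1)) : ℤ) - numCIS (ABjoin A B u v (c + 1) d) =
      ((numCISat A u : ℤ) - 1) * ((c : ℤ) - d - numCISat B v) :=
    mul_left_cancel₀ two_ne_zero key2
  have hXA : 2 ≤ numCISat A u := two_le_numCISat A hA hcard u
  have hXAZ : (0 : ℤ) < (numCISat A u : ℤ) - 1 := by
    have : (2 : ℤ) ≤ (numCISat A u : ℤ) := by exact_mod_cast hXA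
    linarith
  have harith : ((c + 2 : ℕ) : ℤ) - ((d + 2 : ℕ) : ℤ) = (c : ℤ) - d := by push_cast; ring
  constructor
  · rw [key, harith]
  · rw [harith]
    constructor
    · intro h
      have h' : (0 : ℤ) < ((numCISat A u : ℤ) - 1) * ((c : ℤ) - d - numCISat B v) := by
        rw [← key]
        have hcast : (numCIS (ABjoin A B u v (c + 1) d) : ℤ) <
            numCIS (ABjoin A B u v c (d + 1)) := by exact_mod_cast h
        linarith
      by_contra hE
      push_neg at hE
      have hnp : ((numCISat A u : ℤ) - 1) * ((c : ℤ) - d - numCISat B v) ≤ 0 :=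
        mul_nonpos_iff.mpr (Or.inl ⟨hXAZ.le, by linarith⟩)
      linarith
    · intro h
      have h' : (0 : ℤ) < ((numCISat A u : ℤ) - 1) * ((c : ℤ) - d - numCISat B v) :=
        mul_pos hXAZ (by linarith)
      rw [← key] at h'
      have hcast : (numCIS (ABjoin A B u v (c + 1) d) : ℤ) <
          numCIS (ABjoin A B u v c (d + 1)) := by linarith
      exact_mod_cast hcast
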